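/- Let N ≥ 1 and let H_i : ℝ^d × ℝ → ℝ (i = 1,…,N) be continuous, coercive and quasiconvex. Set A_i(p') = min_{p ∈ ℝ} H_i(p',p), A_0(p') = max_{i} A_i(p'), let π_i^0(p') be the minimal minimizer of p ↦ H_i(p',p), and let p_i^0(p') be the minimal p ≥ π_i^0(p') such that H_i(p',p) = A_0(p'). Let F : ℝ^d × ℝ^N → ℝ be continuous and nonincreasing in each of its last N variables. Then for every p' ∈ ℝ^d such that F(p', p^0(p')) ≥ A_0(p'), where p^0(p') = (p_1^0(p'),…,p_N^0(p')), there exists a unique λ ≥ A_0(p') with the property that there exist p_i^+ ≥ p_i^0(p') (i = 1,…,N) satisfying H_i(p', p_i^+) = λ for every i and F(p', (p_1^+,…,p_N^+)) = λ. -/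

import Mathlib

lemma Fmono_aux {d N : ℕ}
    (F : EuclideanSpace ℝ (Fin d) × (Fin N → ℝ) → ℝ)
    (hFmono : ∀ (p' : EuclideanSpace ℝ (Fin d)) (q : Fin N → ℝ) (i : Fin N) (a b : ℝ),
      a ≤ b → F (p', Function.update q i b) ≤ F (p', Function.update q i a))
    (p' : EuclideanSpace ℝ (Fin d)) (q r : Fin N → ℝ) (h : ∀ i, q i ≤ r i) :
    F (p', r) ≤ F (p', q) := by
  classical
  have key : ∀ s : Finset (Fin N),
      F (p', fun i => if i ∈ s then r i else q i) ≤ F (p', q) := by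
    intro s
    induction s using Finset.induction_on with
    | empty => simp
    | @insert j s hj ih =>
      have hfj : (fun i => if i ∈ s then r i else q i) j = q j := by simp [hj]
      have h1 : (fun i => if i ∈ insert j s then r i else q i)
          = Function.update (fun i => if i ∈ s then r i else q i) j (r j) := by
        funext i
        rcases eq_or_ne i j with rfl | hij
        · simp
        · simp [Function.update_of_ne hij, Finset.mem_insert, hij]
      have h2 : Function.update (fun i => if i ∈ s then r i else q i) j (q j)
          = fun i => if i ∈ s then r i else q i := by
        rw [← hfj]; exact Function.update_eq_self _ _
      calc F (p', fun i => if i ∈ insert j s then r i else q i)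
          = F (p', Function.update (fun i => if i ∈ s then r i else q i) j (r j)) := by rw [h1]
        _ ≤ F (p', Function.update (fun i => if i ∈ s then r i else q i) j (q j)) :=
            hFmono _ _ j _ _ (h j)
        _ = F (p', fun i => if i ∈ s then r i else q i) := by rw [h2]
        _ ≤ F (p', q) := ih
  simpa using key Finset.univ

theorem flux_limiter_exists_unique (d N : ℕ) (hN : 1 ≤ N)
    (H : Fin N → EuclideanSpace ℝ (Fin d) × ℝ → ℝ)
    (hcont : ∀ i, Continuous (H i))
    (hcoer : ∀ i, ∀ M : ℝ, ∃ R : ℝ, ∀ P : EuclideanSpace ℝ (Fin d) × ℝ,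
      R ≤ ‖P‖ → M ≤ H i P)
    (hqc : ∀ i (lam : ℝ), Convex ℝ {P : EuclideanSpace ℝ (Fin d) × ℝ | H i P ≤ lam})
    (Ai : Fin N → EuclideanSpace ℝ (Fin d) → ℝ)
    (hAi : ∀ i p', IsLeast (Set.range fun p : ℝ => H i (p', p)) (Ai i p'))
    (A0 : EuclideanSpace ℝ (Fin d) → ℝ)
    (hA0 : ∀ p', IsGreatest (Set.range fun i => Ai i p') (A0 p'))
    (π0 : Fin N → EuclideanSpace ℝ (Fin d) → ℝ)
    (hπ0 : ∀ i p', IsLeast {p : ℝ | ∀ q : ℝ, H i (p', p) ≤ H i (p', q)} (π0 i p'))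
    (p0 : Fin N → EuclideanSpace ℝ (Fin d) → ℝ)
    (hp0 : ∀ i p', IsLeast {p : ℝ | π0 i p' ≤ p ∧ H i (p', p) = A0 p'} (p0 i p'))
    (F : EuclideanSpace ℝ (Fin d) × (Fin N → ℝ) → ℝ)
    (hFcont : Continuous F)
    (hFmono : ∀ (p' : EuclideanSpace ℝ (Fin d)) (q : Fin N → ℝ) (i : Fin N) (a b : ℝ),
      a ≤ b → F (p', Function.update q i b) ≤ F (p', Function.update q i a))
    (p' : EuclideanSpace ℝ (Fin d))
    (hF0 : A0 p' ≤ F (p', fun i => p0 i p')) :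
    ∃! lam : ℝ, A0 p' ≤ lam ∧ ∃ pp : Fin N → ℝ,
      (∀ i, p0 i p' ≤ pp i) ∧ (∀ i, H i (p', pp i) = lam) ∧ F (p', pp) = lam := by
  classical
  have hNe : Nonempty (Fin N) := ⟨⟨0, hN⟩⟩
  have hune : (Finset.univ : Finset (Fin N)).Nonempty := Finset.univ_nonempty
  set A := A0 p' with hAdef
  -- continuity of the slices
  have hHc : ∀ i, Continuous fun p : ℝ => H i (p', p) :=
    fun i => (hcont i).comp (continuous_const.prodMk continuous_id)
  -- basic facts about p0, π0
  have hπp0 : ∀ i, π0 i p' ≤ p0 i p' := fun i => (hp0 i p').1.1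
  have hHp0 : ∀ i, H i (p', p0 i p') = A := fun i => (hp0 i p').1.2
  have hπmin : ∀ i q, H i (p', π0 i p') ≤ H i (p', q) := fun i => (hπ0 i p').1
  -- monotonicity of H i (p', ·) on [π0, ∞)
  have Hmono : ∀ (i : Fin N) (a b : ℝ), π0 i p' ≤ a → a ≤ b →
      H i (p', a) ≤ H i (p', b) := by
    intro i a b hπa hab
    rcases eq_or_lt_of_le (hπa.trans hab) with hpb | hpb
    · have : a = b := le_antisymm hab (hpb ▸ hπa)
      rw [this]
    · set c := π0 i p' with hcdef
      set t := (a - c) / (b - c) with htdef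
      have hbc : 0 < b - c := sub_pos.2 hpb
      have ht0 : 0 ≤ t := div_nonneg (sub_nonneg.2 hπa) hbc.le
      have ht1 : t ≤ 1 := (div_le_one hbc).2 (by linarith)
      have hmem1 : ((p', c) : EuclideanSpace ℝ (Fin d) × ℝ) ∈
          {P : EuclideanSpace ℝ (Fin d) × ℝ | H i P ≤ H i (p', b)} := hπmin i b
      have hmem2 : ((p', b) : EuclideanSpace ℝ (Fin d) × ℝ) ∈
          {P : EuclideanSpace ℝ (Fin d) × ℝ | H i P ≤ H i (p', b)} := by
        exact le_refl (H i (p', b))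
      have hcv := hqc i (H i (p', b)) hmem1 hmem2 (by linarith : (0:ℝ) ≤ 1 - t) ht0
        (by ring)
      have hpt : (1 - t) • ((p', c) : EuclideanSpace ℝ (Fin d) × ℝ) + t • (p', b)
          = (p', a) := by
        have hta : (1 - t) * c + t * b = a := by
          have : t * (b - c) = a - c := div_mul_cancel₀ _ hbc.ne'
          nlinarith [this]
        refine Prod.ext ?_ ?_
        · show (1 - t) • p' + t • p' = p'
          rw [← add_smul]; simp
        · simpa using hta
      rw [hpt] at hcv
      exact hcv
  -- coercivity of the slices
  have hcoer' : ∀ (i : Fin N) (M : ℝ), ∃ R : ℝ, ∀ p : ℝ, R ≤ p → M ≤ H i (p', p) := by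
    intro i M
    obtain ⟨R, hR⟩ := hcoer i M
    refine ⟨max R 0, fun p hp => hR (p', p) ?_⟩
    have h1 : R ≤ p := (le_max_left R 0).trans hp
    have h2 : (0:ℝ) ≤ p := (le_max_right R 0).trans hp
    calc R ≤ p := h1
      _ = ‖p‖ := by rw [Real.norm_eq_abs, abs_of_nonneg h2]
      _ ≤ ‖((p', p) : EuclideanSpace ℝ (Fin d) × ℝ)‖ := by
          simpa using norm_snd_le ((p', p) : EuclideanSpace ℝ (Fin d) × ℝ)
  -- solutions of H = lam above p0 exist for lam ≥ A
  have solset : ∀ (i : Fin N) (lam : ℝ), A ≤ lam →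
      ∃ p : ℝ, p0 i p' ≤ p ∧ H i (p', p) = lam := by
    intro i lam hlam
    obtain ⟨R, hR⟩ := hcoer' i lam
    set b := max R (p0 i p') with hbdef
    have hb : p0 i p' ≤ b := le_max_right _ _
    have hmem : lam ∈ Set.Icc (H i (p', p0 i p')) (H i (p', b)) :=
      ⟨by rw [hHp0 i]; exact hlam, hR b (le_max_left _ _)⟩
    obtain ⟨p, hp, hpe⟩ := intermediate_value_Icc hb ((hHc i).continuousOn) hmem
    exact ⟨p, hp.1, hpe⟩
  -- define g and G
  set g : Fin N → ℝ → ℝ :=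
    fun i lam => sInf {p : ℝ | p0 i p' ≤ p ∧ H i (p', p) = lam} with hgdef
  set G : Fin N → ℝ → ℝ :=
    fun i lam => sSup {p : ℝ | p0 i p' ≤ p ∧ H i (p', p) ≤ lam} with hGdef
  have hgLeast : ∀ (i : Fin N) (lam : ℝ), A ≤ lam →
      IsLeast {p : ℝ | p0 i p' ≤ p ∧ H i (p', p) = lam} (g i lam) := by
    intro i lam hlam
    have hcl : IsClosed {p : ℝ | p0 i p' ≤ p ∧ H i (p', p) = lam} := by
      have : {p : ℝ | p0 i p' ≤ p ∧ H i (p', p) = lam}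
          = Set.Ici (p0 i p') ∩ (fun p => H i (p', p)) ⁻¹' {lam} := by
        ext p; simp [Set.mem_Ici, Set.mem_preimage]
      rw [this]
      exact isClosed_Ici.inter (isClosed_singleton.preimage (hHc i))
    have hne : {p : ℝ | p0 i p' ≤ p ∧ H i (p', p) = lam}.Nonempty := solset i lam hlam
    have hbdd : BddBelow {p : ℝ | p0 i p' ≤ p ∧ H i (p', p) = lam} :=
      ⟨p0 i p', fun x hx => hx.1⟩
    exact ⟨hcl.csInf_mem hne hbdd, fun x hx => csInf_le hbdd hx⟩
  have hGGreatest : ∀ (i : Fin N) (lam : ℝ), A ≤ lam →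
      IsGreatest {p : ℝ | p0 i p' ≤ p ∧ H i (p', p) ≤ lam} (G i lam) := by
    intro i lam hlam
    have hcl : IsClosed {p : ℝ | p0 i p' ≤ p ∧ H i (p', p) ≤ lam} := by
      have : {p : ℝ | p0 i p' ≤ p ∧ H i (p', p) ≤ lam}
          = Set.Ici (p0 i p') ∩ (fun p => H i (p', p)) ⁻¹' Set.Iic lam := by
        ext p; simp [Set.mem_Ici, Set.mem_preimage]
      rw [this]
      exact isClosed_Ici.inter (isClosed_Iic.preimage (hHc i))
    have hne : {p : ℝ | p0 i p' ≤ p ∧ H i (p', p) ≤ lam}.Nonempty :=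
      ⟨p0 i p', le_rfl, by rw [hHp0 i]; exact hlam⟩
    have hbdd : BddAbove {p : ℝ | p0 i p' ≤ p ∧ H i (p', p) ≤ lam} := by
      obtain ⟨R, hR⟩ := hcoer' i (lam + 1)
      refine ⟨R, fun x hx => ?_⟩
      by_contra hxR
      push_neg at hxR
      have := hR x hxR.le
      linarith [hx.2]
    exact ⟨hcl.csSup_mem hne hbdd, fun x hx => le_csSup hbdd hx⟩
  have hgp0 : ∀ (i : Fin N) (lam : ℝ), A ≤ lam → p0 i p' ≤ g i lam :=
    fun i lam h => (hgLeast i lam h).1.1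
  have hgH : ∀ (i : Fin N) (lam : ℝ), A ≤ lam → H i (p', g i lam) = lam :=
    fun i lam h => (hgLeast i lam h).1.2
  have hGp0 : ∀ (i : Fin N) (lam : ℝ), A ≤ lam → p0 i p' ≤ G i lam :=
    fun i lam h => (hGGreatest i lam h).1.1
  have hGH : ∀ (i : Fin N) (lam : ℝ), A ≤ lam → H i (p', G i lam) = lam := by
    intro i lam hlam
    have hle : H i (p', G i lam) ≤ lam := (hGGreatest i lam hlam).1.2
    obtain ⟨R, hR⟩ := hcoer' i lam
    set b := max R (G i lam) with hbdef
    have hb : G i lam ≤ b := le_max_right _ _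
    have hmem : lam ∈ Set.Icc (H i (p', G i lam)) (H i (p', b)) :=
      ⟨hle, hR b (le_max_left _ _)⟩
    obtain ⟨p, hp, hpe⟩ := intermediate_value_Icc hb ((hHc i).continuousOn) hmem
    have hpG : p ≤ G i lam := (hGGreatest i lam hlam).2
      ⟨(hGp0 i lam hlam).trans hp.1, hpe.le⟩
    have hEq : p = G i lam := le_antisymm hpG hp.1
    rw [← hEq]
    exact hpe
  have hπg : ∀ (i : Fin N) (lam : ℝ), A ≤ lam → π0 i p' ≤ g i lam :=
    fun i lam h => (hπp0 i).trans (hgp0 i lam h)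
  have hg_le_G : ∀ (i : Fin N) (lam : ℝ), A ≤ lam → g i lam ≤ G i lam := by
    intro i lam h
    exact (hGGreatest i lam h).2 ⟨hgp0 i lam h, (hgH i lam h).le⟩
  have gmono : ∀ (i : Fin N) (lam mu : ℝ), A ≤ lam → lam ≤ mu → g i lam ≤ g i mu := by
    intro i lam mu hlam hlm
    by_contra hc
    push_neg at hc
    have hmu : A ≤ mu := hlam.trans hlm
    have := Hmono i (g i mu) (g i lam) (hπg i mu hmu) hc.le
    rw [hgH i mu hmu, hgH i lam hlam] at this
    have hEq : lam = mu := le_antisymm hlm this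
    rw [hEq] at hc
    exact lt_irrefl _ hc
  have G_lt_g : ∀ (i : Fin N) (lam mu : ℝ), A ≤ lam → lam < mu → G i lam < g i mu := by
    intro i lam mu hlam hlm
    by_contra hc
    push_neg at hc
    have hmu : A ≤ mu := hlam.trans hlm.le
    have := Hmono i (g i mu) (G i lam) (hπg i mu hmu) hc
    rw [hgH i mu hmu, hGH i lam hlam] at this
    linarith
  have hgA : ∀ i, g i A = p0 i p' := by
    intro i
    exact (hgLeast i A le_rfl).unique ⟨⟨le_rfl, hHp0 i⟩, fun x hx => hx.1⟩
  -- pointwise continuity of F in the last N variables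
  have Fc : ∀ (r : Fin N → ℝ) (ε : ℝ), 0 < ε → ∃ δ > 0, ∀ q : Fin N → ℝ,
      dist q r < δ → |F (p', q) - F (p', r)| < ε := by
    intro r ε hε
    have := (Metric.continuousAt_iff).1 (hFcont.continuousAt (x := (p', r))) ε hε
    obtain ⟨δ, hδ, hδ'⟩ := this
    refine ⟨δ, hδ, fun q hq => ?_⟩
    have hd : dist ((p', q) : EuclideanSpace ℝ (Fin d) × (Fin N → ℝ)) (p', r) < δ := by
      rw [Prod.dist_eq]
      simp only [dist_self]
      rw [max_eq_right dist_nonneg]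
      exact hq
    have := hδ' hd
    rwa [Real.dist_eq] at this
  -- the key set S and its supremum
  set S : Set ℝ := {lam : ℝ | A ≤ lam ∧ lam ≤ F (p', fun i => g i lam)} with hSdef
  have hAS : A ∈ S := by
    refine ⟨le_rfl, ?_⟩
    have : (fun i => g i A) = fun i => p0 i p' := funext hgA
    rw [this]; exact hF0
  have hSne : S.Nonempty := ⟨A, hAS⟩
  have hSbdd : BddAbove S := by
    refine ⟨F (p', fun i => p0 i p'), fun lam hlam => ?_⟩
    exact hlam.2.trans (Fmono_aux F hFmono p' _ _ (fun i => hgp0 i lam hlam.1))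
  set lams : ℝ := sSup S with hlamsdef
  have hlamA : A ≤ lams := le_csSup hSbdd hAS
  -- claim 1 : lams ≤ F (p', g · lams)
  have claim1 : lams ≤ F (p', fun i => g i lams) := by
    rcases eq_or_lt_of_le hlamA with hE | hlt0
    · rw [← hE]; exact hAS.2.trans (le_of_eq (by rw [hE]))
    by_contra hc
    push_neg at hc
    set ε0 := lams - F (p', fun i => g i lams) with hε0
    have hε0pos : 0 < ε0 := by simp [hε0]; linarith
    obtain ⟨δ, hδ, hδ'⟩ := Fc (fun i => g i lams) (ε0 / 2) (by linarith)
    -- thresholds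
    set τ : Fin N → ℝ := fun i =>
      if p0 i p' ≤ g i lams - δ then H i (p', g i lams - δ) else A with hτdef
    have hτlt : ∀ i, τ i < lams := by
      intro i
      show (if p0 i p' ≤ g i lams - δ then H i (p', g i lams - δ) else A) < lams
      split_ifs with hcase
      · have h1 : g i lams - δ < g i lams := by linarith
        have h2 : H i (p', g i lams - δ) ≤ lams := by
          have := Hmono i (g i lams - δ) (g i lams) ((hπp0 i).trans hcase) h1.le
          rwa [hgH i lams hlamA] at this
        rcases eq_or_lt_of_le h2 with hE | hL
        · exfalso
          have := (hgLeast i lams hlamA).2 ⟨hcase, hE⟩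
          linarith
        · exact hL
      · exact hlt0
    set x := max (lams - ε0 / 2) (Finset.univ.sup' hune τ) with hxdef
    have hxlt : x < lams := by
      apply max_lt (by linarith)
      rw [Finset.sup'_lt_iff]
      exact fun i _ => hτlt i
    obtain ⟨lam, hlamS, hxlam⟩ := exists_lt_of_lt_csSup hSne hxlt
    have hlamle : lam ≤ lams := le_csSup hSbdd hlamS
    have hgclose : ∀ i, g i lams - δ < g i lam := by
      intro i
      by_cases hcase : p0 i p' ≤ g i lams - δ
      · have hτi : τ i < lam := by
          refine lt_of_le_of_lt ?_ hxlam
          exact le_trans (Finset.le_sup' τ (Finset.mem_univ i)) (le_max_right _ _)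
        by_contra hcc
        push_neg at hcc
        have h5 := Hmono i (g i lam) (g i lams - δ) (hπg i lam hlamS.1) hcc
        rw [hgH i lam hlamS.1] at h5
        have hτi' : H i (p', g i lams - δ) < lam := by
          simpa [hτdef, hcase] using hτi
        linarith
      · push_neg at hcase
        exact lt_of_lt_of_le hcase (hgp0 i lam hlamS.1)
    have hdist : dist (fun i => g i lam) (fun i => g i lams) < δ := by
      rw [dist_pi_lt_iff hδ]
      intro i
      rw [Real.dist_eq, abs_sub_lt_iff]
      constructor
      · have := gmono i lam lams hlamS.1 hlamle
        linarith
      · have := hgclose i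
        linarith
    have hF := hδ' _ hdist
    rw [abs_sub_lt_iff] at hF
    have h1 : F (p', fun i => g i lam) < lams - ε0 / 2 := by
      have := hF.1
      simp only [hε0] at this ⊢
      linarith
    have h2 : lams - ε0 / 2 ≤ x := le_max_left _ _
    have h3 : lam ≤ F (p', fun i => g i lam) := hlamS.2
    linarith
  -- claim 2 : F (p', G · lams) ≤ lams
  have claim2 : F (p', fun i => G i lams) ≤ lams := by
    by_contra hc
    push_neg at hc
    set ε0 := F (p', fun i => G i lams) - lams with hε0
    have hε0pos : 0 < ε0 := by simp [hε0]; linarith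
    obtain ⟨δ, hδ, hδ'⟩ := Fc (fun i => G i lams) (ε0 / 2) (by linarith)
    set η := δ / 2 with hηdef
    have hηpos : 0 < η := by linarith
    set m : Fin N → ℝ := fun i => H i (p', G i lams + η) with hmdef
    have hmgt : ∀ i, lams < m i := by
      intro i
      have h1 : lams ≤ m i := by
        have := Hmono i (G i lams) (G i lams + η) ((hπp0 i).trans (hGp0 i lams hlamA))
          (by linarith)
        rwa [hGH i lams hlamA] at this
      rcases eq_or_lt_of_le h1 with hE | hL
      · exfalso
        have hmem : G i lams + η ∈ {p : ℝ | p0 i p' ≤ p ∧ H i (p', p) ≤ lams} :=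
          ⟨by linarith [hGp0 i lams hlamA], le_of_eq hE.symm⟩
        have := (hGGreatest i lams hlamA).2 hmem
        linarith
      · exact hL
    set lam := min (lams + ε0 / 2) (Finset.univ.inf' hune m) with hlamdef
    have hlamgt : lams < lam := by
      apply lt_min (by linarith)
      rw [Finset.lt_inf'_iff]
      exact fun i _ => hmgt i
    have hlamA' : A ≤ lam := hlamA.trans hlamgt.le
    have hglam_le : ∀ i, g i lam ≤ G i lams + η := by
      intro i
      have hb : p0 i p' ≤ G i lams + η := by linarith [hGp0 i lams hlamA]
      have hmem : lam ∈ Set.Icc (H i (p', p0 i p')) (H i (p', G i lams + η)) := by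
        constructor
        · rw [hHp0 i]; exact hlamA'
        · exact (min_le_right _ _).trans (Finset.inf'_le m (Finset.mem_univ i))
      obtain ⟨p, hp, hpe⟩ := intermediate_value_Icc hb ((hHc i).continuousOn) hmem
      exact ((hgLeast i lam hlamA').2 ⟨hp.1, hpe⟩).trans hp.2
    have hglam_gt : ∀ i, G i lams < g i lam := fun i => G_lt_g i lams lam hlamA hlamgt
    have hdist : dist (fun i => g i lam) (fun i => G i lams) < δ := by
      rw [dist_pi_lt_iff hδ]
      intro i
      rw [Real.dist_eq, abs_sub_lt_iff]
      constructor
      · have := hglam_le i; linarith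
      · have := hglam_gt i; linarith
    have hF := hδ' _ hdist
    rw [abs_sub_lt_iff] at hF
    have h1 : lam ≤ F (p', fun i => g i lam) := by
      have := hF.2
      have h2 : lam ≤ lams + ε0 / 2 := min_le_left _ _
      simp only [hε0] at this ⊢
      linarith
    have hlamS : lam ∈ S := ⟨hlamA', h1⟩
    have := le_csSup hSbdd hlamS
    linarith
  -- existence of the witness via IVT along the segment from g lams to G lams
  set f : ℝ → ℝ := fun t => F (p', fun i => g i lams + t * (G i lams - g i lams))
    with hfdef
  have hf0 : f 0 = F (p', fun i => g i lams) := by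
    show F (p', fun i => g i lams + 0 * (G i lams - g i lams)) = _
    have h : (fun i => g i lams + 0 * (G i lams - g i lams)) = fun i => g i lams := by
      funext i; ring
    rw [h]
  have hf1 : f 1 = F (p', fun i => G i lams) := by
    show F (p', fun i => g i lams + 1 * (G i lams - g i lams)) = _
    have h : (fun i => g i lams + 1 * (G i lams - g i lams)) = fun i => G i lams := by
      funext i; ring
    rw [h]
  have hfc : Continuous f := by
    apply hFcont.comp
    apply continuous_const.prodMk
    exact continuous_pi fun i =>
      continuous_const.add (continuous_id.mul continuous_const)
  have hmem : lams ∈ Set.Icc (f 1) (f 0) := by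
    rw [hf0, hf1]; exact ⟨claim2, claim1⟩
  obtain ⟨t, ht, hft⟩ := intermediate_value_Icc' zero_le_one hfc.continuousOn hmem
  set pp : Fin N → ℝ := fun i => g i lams + t * (G i lams - g i lams) with hppdef
  have hpp_ge : ∀ i, g i lams ≤ pp i := by
    intro i
    have h1 : 0 ≤ t * (G i lams - g i lams) :=
      mul_nonneg ht.1 (sub_nonneg.2 (hg_le_G i lams hlamA))
    simp only [hppdef]; linarith
  have hpp_le : ∀ i, pp i ≤ G i lams := by
    intro i
    have h1 : t * (G i lams - g i lams) ≤ 1 * (G i lams - g i lams) :=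
      mul_le_mul_of_nonneg_right ht.2 (sub_nonneg.2 (hg_le_G i lams hlamA))
    simp only [hppdef]; linarith
  have hppH : ∀ i, H i (p', pp i) = lams := by
    intro i
    have h1 : H i (p', pp i) ≤ lams := by
      have := Hmono i (pp i) (G i lams) ((hπg i lams hlamA).trans (hpp_ge i)) (hpp_le i)
      rwa [hGH i lams hlamA] at this
    have h2 : lams ≤ H i (p', pp i) := by
      have := Hmono i (g i lams) (pp i) (hπg i lams hlamA) (hpp_ge i)
      rwa [hgH i lams hlamA] at this
    exact le_antisymm h1 h2
  have hppF : F (p', pp) = lams := hft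
  have hpp0 : ∀ i, p0 i p' ≤ pp i := fun i => (hgp0 i lams hlamA).trans (hpp_ge i)
  -- uniqueness
  have uniq : ∀ (μ1 μ2 : ℝ) (q1 q2 : Fin N → ℝ),
      (∀ i, p0 i p' ≤ q1 i) → (∀ i, H i (p', q1 i) = μ1) → F (p', q1) = μ1 →
      (∀ i, p0 i p' ≤ q2 i) → (∀ i, H i (p', q2 i) = μ2) → F (p', q2) = μ2 →
      ¬ (μ1 < μ2) := by
    intro μ1 μ2 q1 q2 h10 h1H h1F h20 h2H h2F hlt
    have h12 : ∀ i, q1 i ≤ q2 i := by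
      intro i
      by_contra hcc
      push_neg at hcc
      have := Hmono i (q2 i) (q1 i) ((hπp0 i).trans (h20 i)) hcc.le
      rw [h1H i, h2H i] at this
      linarith
    have := Fmono_aux F hFmono p' q1 q2 h12
    rw [h1F, h2F] at this
    linarith
  refine ⟨lams, ⟨hlamA, pp, hpp0, hppH, hppF⟩, ?_⟩
  rintro μ ⟨hμA, q, hq0, hqH, hqF⟩
  rcases lt_trichotomy μ lams with h | h | h
  · exact absurd h (uniq μ lams q pp hq0 hqH hqF hpp0 hppH hppF)
  · exact h
  · exact absurd h (uniq lams μ pp q hpp0 hppH hppF hq0 hqH hqF)
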